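/- arXiv:1006.1678 — 3 statements merged into one kernel-verified Lean document; each statement's English description precedes it below -/
import Mathlib

section
/- Let F be a complex matrix (viewed as a bounded operator) with operator norm ‖F‖₂ ≤ 1. Then ‖(I + F F*)^{-1/2} - I‖₂ ≤ (1/2)·‖F‖₂². -/
open scoped Matrix.Norms.L2Operator ComplexOrder
open Matrix

/-- The positive semidefinite square root of a positive semidefinite matrix
(as defined in Mathlib of December 2024, since removed). -/
noncomputable def Matrix.PosSemidef.sqrt {n : Type*} [Fintype n] [DecidableEq n] {𝕜 : Type*}
    [RCLike 𝕜] {A : Matrix n n 𝕜} (hA : A.PosSemidef) : Matrix n n 𝕜 :=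
  hA.1.eigenvectorUnitary.1 * diagonal ((↑) ∘ (√·) ∘ hA.1.eigenvalues) *
  (star hA.1.eigenvectorUnitary : Matrix n n 𝕜)

section aux

lemma aux_norm_one_le {n : Type*} [Fintype n] [DecidableEq n] :
    ‖(1 : Matrix n n ℂ)‖ ≤ 1 := by
  rw [Matrix.cstar_norm_def, _root_.map_one]
  exact ContinuousLinearMap.norm_id_le

lemma aux_norm_unitary_le {n : Type*} [Fintype n] [DecidableEq n]
    (U : Matrix n n ℂ) (hU : Uᴴ * U = 1) : ‖U‖ ≤ 1 := by
  have h := Matrix.l2_opNorm_conjTranspose_mul_self U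
  rw [hU] at h
  have h1 : ‖(1 : Matrix n n ℂ)‖ ≤ 1 := aux_norm_one_le
  nlinarith [norm_nonneg U]

lemma aux_norm_diagonal_le {n : Type*} [Fintype n] [DecidableEq n]
    {d : n → ℂ} {c : ℝ} (hc : 0 ≤ c) (h : ∀ i, ‖d i‖ ≤ c) :
    ‖(Matrix.diagonal d : Matrix n n ℂ)‖ ≤ c := by
  rw [Matrix.l2_opNorm_def]
  refine ContinuousLinearMap.opNorm_le_bound _ hc fun x => ?_
  simp only [LinearEquiv.trans_apply, LinearMap.coe_toContinuousLinearMap']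
  rw [Matrix.toEuclideanLin_apply]
  have key : ‖(WithLp.equiv 2 (n → ℂ)).symm
      (Matrix.diagonal d *ᵥ (WithLp.equiv 2 (n → ℂ)) x)‖
      ≤ Real.sqrt (c ^ 2 * ∑ i, ‖x i‖ ^ 2) := by
    rw [EuclideanSpace.norm_eq]
    apply Real.sqrt_le_sqrt
    rw [Finset.mul_sum]
    apply Finset.sum_le_sum
    intro i _
    have he : ((WithLp.equiv 2 (n → ℂ)).symm
        (Matrix.diagonal d *ᵥ (WithLp.equiv 2 (n → ℂ)) x)) i = d i * x i := by
      simp [Matrix.mulVec_diagonal]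
    rw [he, norm_mul, mul_pow]
    have h2 : ‖d i‖ ^ 2 ≤ c ^ 2 := by nlinarith [h i, norm_nonneg (d i)]
    exact mul_le_mul_of_nonneg_right h2 (sq_nonneg _)
  refine key.trans (le_of_eq ?_)
  rw [Real.sqrt_mul (sq_nonneg c), Real.sqrt_sq hc, EuclideanSpace.norm_eq]

lemma aux_dot_star_self (k : Type*) [Fintype k] (w : k → ℂ) :
    star w ⬝ᵥ w = ((‖(EuclideanSpace.equiv k ℂ).symm w‖ : ℝ) ^ 2 : ℂ) := by
  have h : star w ⬝ᵥ w
      = inner ℂ ((EuclideanSpace.equiv k ℂ).symm w) ((EuclideanSpace.equiv k ℂ).symm w) := by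
    simp [dotProduct, PiLp.inner_apply, RCLike.inner_apply, mul_comm, -inner_self_eq_norm_sq_to_K]
  rw [h, inner_self_eq_norm_sq_to_K]
  norm_num

lemma aux_eig {m s : ℕ} (F : Matrix (Fin m) (Fin s) ℂ)
    (hA : (1 + F * Fᴴ).PosSemidef) (i : Fin m) :
    1 ≤ hA.1.eigenvalues i ∧ hA.1.eigenvalues i ≤ 1 + ‖F‖ ^ 2 := by
  set v : EuclideanSpace ℂ (Fin m) := hA.1.eigenvectorBasis i with hv
  have hv1 : ‖v‖ = 1 := hA.1.eigenvectorBasis.orthonormal.1 i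
  set μ : ℝ := hA.1.eigenvalues i with hμ
  have h1 : (1 + F * Fᴴ) *ᵥ ⇑v = μ • ⇑v := hA.1.mulVec_eigenvectorBasis i
  have dvv : star (⇑v) ⬝ᵥ (⇑v) = 1 := by
    rw [aux_dot_star_self]
    have : (EuclideanSpace.equiv (Fin m) ℂ).symm (⇑v) = v := rfl
    rw [this, hv1]
    norm_num
  set w : Fin s → ℂ := Fᴴ *ᵥ ⇑v with hwdef
  have hw : star (⇑v) ⬝ᵥ ((F * Fᴴ) *ᵥ ⇑v) = star w ⬝ᵥ w := by
    rw [← Matrix.mulVec_mulVec, Matrix.dotProduct_mulVec]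
    congr 1
    rw [← Matrix.conjTranspose_conjTranspose F, ← Matrix.star_mulVec]
  have key : (μ : ℂ) - 1 = star w ⬝ᵥ w := by
    have h2 : star (⇑v) ⬝ᵥ ((1 + F * Fᴴ) *ᵥ ⇑v) = (μ : ℂ) := by
      rw [h1, dotProduct_smul, dvv]
      simp
    rw [Matrix.add_mulVec, Matrix.one_mulVec, dotProduct_add, dvv, hw] at h2
    linear_combination -h2
  rw [aux_dot_star_self] at key
  set r : ℝ := ‖(EuclideanSpace.equiv (Fin s) ℂ).symm w‖ with hr
  have hμr : μ - 1 = r ^ 2 := by exact_mod_cast key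
  have hrF : r ≤ ‖F‖ := by
    have := Matrix.l2_opNorm_mulVec Fᴴ v
    rw [Matrix.l2_opNorm_conjTranspose, hv1, mul_one] at this
    exact this
  constructor
  · nlinarith [sq_nonneg r]
  · nlinarith [norm_nonneg F, norm_nonneg ((EuclideanSpace.equiv (Fin s) ℂ).symm w)]

lemma aux_scalar {t : ℝ} (h1 : 1 ≤ t) :
    |(Real.sqrt t)⁻¹ - 1| ≤ (t - 1) / 2 := by
  have hu : 1 ≤ Real.sqrt t := by
    rw [show (1:ℝ) = Real.sqrt 1 by simp]
    exact Real.sqrt_le_sqrt h1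
  set u := Real.sqrt t with hudef
  have hu0 : 0 < u := by linarith
  have husq : u ^ 2 = t := Real.sq_sqrt (by linarith)
  have hmul : u⁻¹ * u = 1 := inv_mul_cancel₀ (ne_of_gt hu0)
  have hk1 : u⁻¹ ≤ 1 := by
    rw [inv_le_one_iff₀]; right; exact hu
  have hk0 : 0 ≤ u⁻¹ := by positivity
  rw [abs_of_nonpos (by linarith)]
  rw [← husq]
  nlinarith [mul_nonneg (sub_nonneg.2 hu) (sub_nonneg.2 hk1), sq_nonneg (u - 1)]

end aux

/-- If `F` is a complex matrix with spectral (L² operator) norm `‖F‖ ≤ 1`, then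
`‖(I + F Fᴴ)^{-1/2} - I‖ ≤ (1/2)·‖F‖²`, where `(I + F Fᴴ)^{1/2}` is the positive
semidefinite square root of `I + F Fᴴ`. -/
theorem stmt_4 {m s : ℕ} (F : Matrix (Fin m) (Fin s) ℂ)
    (hF : ‖F‖ ≤ 1) (hA : (1 + F * Fᴴ).PosSemidef) :
    ‖hA.sqrt⁻¹ - 1‖ ≤ (1 / 2) * ‖F‖ ^ 2 := by
  classical
  set μ : Fin m → ℝ := hA.1.eigenvalues with hμ
  set V : Matrix (Fin m) (Fin m) ℂ := (hA.1.eigenvectorUnitary : Matrix (Fin m) (Fin m) ℂ)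
    with hVdef
  have hV1 : Vᴴ * V = 1 := by
    rw [← Matrix.star_eq_conjTranspose]
    exact Unitary.star_mul_self_of_mem hA.1.eigenvectorUnitary.2
  have hV2 : V * Vᴴ = 1 := by
    rw [← Matrix.star_eq_conjTranspose]
    exact Unitary.mul_star_self_of_mem hA.1.eigenvectorUnitary.2
  have heig := aux_eig F hA
  have hg1 : ∀ i, (1:ℝ) ≤ Real.sqrt (μ i) := fun i => by
    rw [show (1:ℝ) = Real.sqrt 1 by simp]
    exact Real.sqrt_le_sqrt (heig i).1
  have hgne : ∀ i, ((Real.sqrt (μ i) : ℝ) : ℂ) ≠ 0 := fun i => by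
    have := hg1 i
    exact_mod_cast (by norm_num; linarith : (Real.sqrt (μ i) : ℝ) ≠ 0)
  set T : Matrix (Fin m) (Fin m) ℂ :=
    V * Matrix.diagonal (fun i => (((Real.sqrt (μ i))⁻¹ : ℝ) : ℂ)) * Vᴴ with hTdef
  have hsqrt : hA.sqrt = V * Matrix.diagonal ((↑) ∘ Real.sqrt ∘ μ) * Vᴴ := rfl
  have hT : hA.sqrt * T = 1 := by
    rw [hsqrt, hTdef]
    simp only [Matrix.mul_assoc]
    rw [← Matrix.mul_assoc Vᴴ V, hV1, Matrix.one_mul,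
      ← Matrix.mul_assoc (Matrix.diagonal (Complex.ofReal ∘ Real.sqrt ∘ μ)),
      Matrix.diagonal_mul_diagonal]
    have : (fun i => (Complex.ofReal ∘ Real.sqrt ∘ μ) i * (((Real.sqrt (μ i))⁻¹ : ℝ) : ℂ))
        = fun _ => (1 : ℂ) := by
      funext i
      simp only [Function.comp_apply]
      rw [← Complex.ofReal_mul, mul_inv_cancel₀ (by have := hg1 i; linarith), Complex.ofReal_one]
    rw [this, Matrix.diagonal_one, Matrix.one_mul, hV2]
  have hinv : hA.sqrt⁻¹ = T := Matrix.inv_eq_right_inv hT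
  set e : Fin m → ℂ := fun i => (((Real.sqrt (μ i))⁻¹ - 1 : ℝ) : ℂ) with hedef
  have hde : Matrix.diagonal e
      = Matrix.diagonal (fun i => (((Real.sqrt (μ i))⁻¹ : ℝ) : ℂ)) - 1 := by
    ext i j
    by_cases hij : i = j
    · subst hij
      simp [hedef, Matrix.one_apply]
    · simp [Matrix.diagonal_apply_ne _ hij, Matrix.one_apply_ne hij]
  have hdiff : hA.sqrt⁻¹ - 1 = V * Matrix.diagonal e * Vᴴ := by
    rw [hinv, hTdef, hde, Matrix.mul_sub, Matrix.mul_one, Matrix.sub_mul, hV2]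
  rw [hdiff]
  have hc : (0:ℝ) ≤ (1/2) * ‖F‖ ^ 2 := by positivity
  have hDn : ‖Matrix.diagonal e‖ ≤ (1/2) * ‖F‖ ^ 2 := by
    apply aux_norm_diagonal_le hc
    intro i
    have h1 := (heig i).1
    have h2 := (heig i).2
    have habs : ‖e i‖ = |(Real.sqrt (μ i))⁻¹ - 1| := by
      show ‖((((Real.sqrt (μ i))⁻¹ - 1 : ℝ)) : ℂ)‖ = _
      rw [Complex.norm_real, Real.norm_eq_abs]
    rw [habs]
    calc |(Real.sqrt (μ i))⁻¹ - 1| ≤ (μ i - 1) / 2 := aux_scalar h1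
      _ ≤ (1/2) * ‖F‖ ^ 2 := by linarith
  have hVn : ‖V‖ ≤ 1 := aux_norm_unitary_le V hV1
  have hVHn : ‖Vᴴ‖ ≤ 1 := by rw [Matrix.l2_opNorm_conjTranspose]; exact hVn
  calc ‖V * Matrix.diagonal e * Vᴴ‖
      ≤ ‖V * Matrix.diagonal e‖ * ‖Vᴴ‖ := Matrix.l2_opNorm_mul _ _
    _ ≤ (‖V‖ * ‖Matrix.diagonal e‖) * ‖Vᴴ‖ := by
        apply mul_le_mul_of_nonneg_right (Matrix.l2_opNorm_mul _ _) (norm_nonneg _)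
    _ ≤ (1 * ((1/2) * ‖F‖ ^ 2)) * 1 := by
        apply mul_le_mul _ hVHn (norm_nonneg _) (by positivity)
        exact mul_le_mul hVn hDn (norm_nonneg _) zero_le_one
    _ = (1/2) * ‖F‖ ^ 2 := by ring
end

section
/- Suppose Φ̃ ∈ ℂ^{n×N} satisfies the restricted isometry property (1-δ⁻)‖Z‖₂² ≤ ‖Φ̃Z‖₂² ≤ (1+δ⁺)‖Z‖₂² for all Z supported on S ∪ S' where S, S' are disjoint with |S| ≤ s, |S'| ≤ s'. Then for all Z supported on S and Z' supported on S', |Re⟨Φ̃Z, Φ̃Z'⟩| ≤ (1/2)(δ⁺ + δ⁻)·‖Z‖₂·‖Z'‖₂. -/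
open Matrix

private lemma normsq_c (z : ℂ) : ‖z‖ ^ 2 = z.re ^ 2 + z.im ^ 2 := by
  rw [Complex.sq_norm, Complex.normSq_apply]; ring

private lemma polar_c (x y : ℂ) :
    ‖x + y‖ ^ 2 - ‖x - y‖ ^ 2 = 4 * (starRingEnd ℂ x * y).re := by
  simp only [normsq_c, Complex.add_re, Complex.add_im, Complex.sub_re, Complex.sub_im,
    Complex.mul_re, Complex.mul_im, Complex.conj_re, Complex.conj_im]
  ring

/-- RIP on the union of disjoint supports bounds the real part of the inner product:
if `(1-δ⁻)‖Z‖₂² ≤ ‖MZ‖₂² ≤ (1+δ⁺)‖Z‖₂²` for all `Z` supported on `S ∪ S'`, where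
`S, S'` are disjoint with `|S| ≤ s`, `|S'| ≤ s'`, then for all `Z` supported on `S`
and `Z'` supported on `S'`,
`|Re⟨MZ, MZ'⟩| ≤ (1/2)(δ⁺ + δ⁻)·‖Z‖₂·‖Z'‖₂`. -/
theorem stmt_7 {n N : ℕ} (M : Matrix (Fin n) (Fin N) ℂ) (δm δp : ℝ)
    (hδm0 : 0 ≤ δm) (hδm1 : δm ≤ 1) (hδp : 0 ≤ δp)
    (s s' : ℕ) (S S' : Finset (Fin N)) (hdisj : Disjoint S S')
    (hS : S.card ≤ s) (hS' : S'.card ≤ s')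
    (hrip : ∀ Z : Fin N → ℂ, (∀ i, Z i ≠ 0 → i ∈ S ∪ S') →
      (1 - δm) * ∑ i, ‖Z i‖ ^ 2 ≤ ∑ k, ‖M.mulVec Z k‖ ^ 2 ∧
        ∑ k, ‖M.mulVec Z k‖ ^ 2 ≤ (1 + δp) * ∑ i, ‖Z i‖ ^ 2) :
    ∀ Z Z' : Fin N → ℂ, (∀ i, Z i ≠ 0 → i ∈ S) → (∀ i, Z' i ≠ 0 → i ∈ S') →
      |(∑ k, starRingEnd ℂ (M.mulVec Z k) * M.mulVec Z' k).re|
        ≤ (1 / 2) * (δp + δm) * Real.sqrt (∑ i, ‖Z i‖ ^ 2) *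
            Real.sqrt (∑ i, ‖Z' i‖ ^ 2) := by
  intro Z Z' hZ hZ'
  set a := ∑ i, ‖Z i‖ ^ 2 with ha_def
  set b := ∑ i, ‖Z' i‖ ^ 2 with hb_def
  have ha0 : 0 ≤ a := Finset.sum_nonneg fun i _ => sq_nonneg _
  have hb0 : 0 ≤ b := Finset.sum_nonneg fun i _ => sq_nonneg _
  have hrhs_nonneg : 0 ≤ (1 / 2) * (δp + δm) * Real.sqrt a * Real.sqrt b := by
    positivity
  -- zero cases
  rcases eq_or_lt_of_le ha0 with ha | ha
  · have hZ0 : ∀ i, Z i = 0 := by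
      intro i
      have := (Finset.sum_eq_zero_iff_of_nonneg (fun i _ => sq_nonneg ‖Z i‖)).1 ha.symm i
        (Finset.mem_univ i)
      have : ‖Z i‖ = 0 := by nlinarith [norm_nonneg (Z i)]
      simpa using this
    have : (fun i => Z i) = 0 := funext hZ0
    have hmv : M.mulVec Z = 0 := by
      rw [show Z = 0 from funext hZ0]; simp
    simp only [hmv, Pi.zero_apply, map_zero, zero_mul, mul_zero,
      Finset.sum_const_zero, Complex.zero_re, abs_zero]
    positivity
  rcases eq_or_lt_of_le hb0 with hb | hb
  · have hZ0 : ∀ i, Z' i = 0 := by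
      intro i
      have := (Finset.sum_eq_zero_iff_of_nonneg (fun i _ => sq_nonneg ‖Z' i‖)).1 hb.symm i
        (Finset.mem_univ i)
      have : ‖Z' i‖ = 0 := by nlinarith [norm_nonneg (Z' i)]
      simpa using this
    have hmv : M.mulVec Z' = 0 := by
      rw [show Z' = 0 from funext hZ0]; simp
    simp only [hmv, Pi.zero_apply, map_zero, zero_mul, mul_zero,
      Finset.sum_const_zero, Complex.zero_re, abs_zero]
    positivity
  -- scaled vectors
  set P := Real.sqrt a with hP_def
  set Q := Real.sqrt b with hQ_def
  have hP : 0 < P := Real.sqrt_pos.2 ha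
  have hQ : 0 < Q := Real.sqrt_pos.2 hb
  have hP2 : P ^ 2 = a := Real.sq_sqrt ha0
  have hQ2 : Q ^ 2 = b := Real.sq_sqrt hb0
  set W : Fin N → ℂ := (Q : ℂ) • Z with hW_def
  set W' : Fin N → ℂ := (P : ℂ) • Z' with hW'_def
  -- disjoint supports: for each i, Z i = 0 or Z' i = 0
  have hzero : ∀ i, Z i = 0 ∨ Z' i = 0 := by
    intro i
    by_contra h
    push_neg at h
    exact (Finset.disjoint_left.1 hdisj (hZ i h.1)) (hZ' i h.2)
  -- norms of scaled vectors
  have hWnorm : ∀ i, ‖W i‖ ^ 2 = b * ‖Z i‖ ^ 2 := by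
    intro i
    rw [hW_def, Pi.smul_apply, smul_eq_mul, norm_mul, mul_pow, Complex.norm_real,
      Real.norm_eq_abs, abs_of_pos hQ, hQ2]
  have hW'norm : ∀ i, ‖W' i‖ ^ 2 = a * ‖Z' i‖ ^ 2 := by
    intro i
    rw [hW'_def, Pi.smul_apply, smul_eq_mul, norm_mul, mul_pow, Complex.norm_real,
      Real.norm_eq_abs, abs_of_pos hP, hP2]
  -- sum of squares of W ± W'
  have hsum_add : ∑ i, ‖W i + W' i‖ ^ 2 = 2 * (a * b) := by
    have : ∀ i, ‖W i + W' i‖ ^ 2 = b * ‖Z i‖ ^ 2 + a * ‖Z' i‖ ^ 2 := by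
      intro i
      rcases hzero i with h | h
      · have hw : W i = 0 := by simp [hW_def, h]
        rw [hw, zero_add, hW'norm i, h]; simp
      · have hw : W' i = 0 := by simp [hW'_def, h]
        rw [hw, add_zero, hWnorm i, h]; simp
    rw [Finset.sum_congr rfl fun i _ => this i, Finset.sum_add_distrib,
      ← Finset.mul_sum, ← Finset.mul_sum, ← ha_def, ← hb_def]
    ring
  have hsum_sub : ∑ i, ‖W i - W' i‖ ^ 2 = 2 * (a * b) := by
    have : ∀ i, ‖W i - W' i‖ ^ 2 = b * ‖Z i‖ ^ 2 + a * ‖Z' i‖ ^ 2 := by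
      intro i
      rcases hzero i with h | h
      · have hw : W i = 0 := by simp [hW_def, h]
        rw [hw, zero_sub, norm_neg, hW'norm i, h]; simp
      · have hw : W' i = 0 := by simp [hW'_def, h]
        rw [hw, sub_zero, hWnorm i, h]; simp
    rw [Finset.sum_congr rfl fun i _ => this i, Finset.sum_add_distrib,
      ← Finset.mul_sum, ← Finset.mul_sum, ← ha_def, ← hb_def]
    ring
  -- support conditions
  have hsupp_add : ∀ i, (W + W') i ≠ 0 → i ∈ S ∪ S' := by
    intro i hi
    rcases hzero i with h | h
    · have : W' i ≠ 0 := by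
        intro h'; apply hi; simp [hW_def, h, h', Pi.add_apply]
      have hZ'i : Z' i ≠ 0 := by
        intro h'; apply this; simp [hW'_def, h']
      exact Finset.mem_union_right _ (hZ' i hZ'i)
    · have : W i ≠ 0 := by
        intro h'; apply hi; simp [hW'_def, h, h', Pi.add_apply]
      have hZi : Z i ≠ 0 := by
        intro h'; apply this; simp [hW_def, h']
      exact Finset.mem_union_left _ (hZ i hZi)
  have hsupp_sub : ∀ i, (W - W') i ≠ 0 → i ∈ S ∪ S' := by
    intro i hi
    rcases hzero i with h | h
    · have : W' i ≠ 0 := by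
        intro h'; apply hi; simp [hW_def, h, h', Pi.sub_apply]
      have hZ'i : Z' i ≠ 0 := by
        intro h'; apply this; simp [hW'_def, h']
      exact Finset.mem_union_right _ (hZ' i hZ'i)
    · have : W i ≠ 0 := by
        intro h'; apply hi; simp [hW'_def, h, h', Pi.sub_apply]
      have hZi : Z i ≠ 0 := by
        intro h'; apply this; simp [hW_def, h']
      exact Finset.mem_union_left _ (hZ i hZi)
  -- apply RIP
  obtain ⟨h1, h2⟩ := hrip (W + W') (by simpa using hsupp_add)
  obtain ⟨h3, h4⟩ := hrip (W - W') (by simpa using hsupp_sub)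
  rw [show ∑ i, ‖(W + W') i‖ ^ 2 = 2 * (a*b) by simpa using hsum_add] at h1 h2
  rw [show ∑ i, ‖(W - W') i‖ ^ 2 = 2 * (a*b) by simpa using hsum_sub] at h3 h4
  -- polarization
  set I := (∑ k, starRingEnd ℂ (M.mulVec Z k) * M.mulVec Z' k).re with hI_def
  have hMadd : M.mulVec (W + W') = M.mulVec W + M.mulVec W' := Matrix.mulVec_add M W W'
  have hMsub : M.mulVec (W - W') = M.mulVec W - M.mulVec W' := Matrix.mulVec_sub M W W'
  have hMW : M.mulVec W = (Q : ℂ) • M.mulVec Z := Matrix.mulVec_smul M _ Z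
  have hMW' : M.mulVec W' = (P : ℂ) • M.mulVec Z' := Matrix.mulVec_smul M _ Z'
  have hpolar : ∑ k, ‖M.mulVec (W + W') k‖ ^ 2 - ∑ k, ‖M.mulVec (W - W') k‖ ^ 2
      = 4 * (P * Q) * I := by
    rw [hMadd, hMsub, ← Finset.sum_sub_distrib]
    have hpt : ∀ k, ‖(M.mulVec W + M.mulVec W') k‖ ^ 2 - ‖(M.mulVec W - M.mulVec W') k‖ ^ 2
        = 4 * (P * Q) * (starRingEnd ℂ (M.mulVec Z k) * M.mulVec Z' k).re := by
      intro k
      rw [Pi.add_apply, Pi.sub_apply, polar_c]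
      rw [hMW, hMW', Pi.smul_apply, Pi.smul_apply]
      have heq : starRingEnd ℂ ((Q:ℂ) • M.mulVec Z k) * ((P:ℂ) • M.mulVec Z' k)
          = ((Q * P : ℝ) : ℂ) * (starRingEnd ℂ (M.mulVec Z k) * M.mulVec Z' k) := by
        simp only [smul_eq_mul, _root_.map_mul, Complex.conj_ofReal]
        push_cast
        ring
      rw [heq, Complex.re_ofReal_mul]
      ring
    rw [Finset.sum_congr rfl fun k _ => hpt k, ← Finset.mul_sum, hI_def, Complex.re_sum]
  have hub : 4 * (P * Q) * I ≤ 2 * (a * b) * (δp + δm) := by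
    linarith [hpolar, h2, h3]
  have hlb : -(2 * (a * b) * (δp + δm)) ≤ 4 * (P * Q) * I := by
    linarith [hpolar, h1, h4]
  have hab : a * b = (P * Q) ^ 2 := by rw [← hP2, ← hQ2]; ring
  have hPQ : 0 < P * Q := mul_pos hP hQ
  rw [hab] at hub hlb
  clear hpolar h1 h2 h3 h4 hsupp_add hsupp_sub hsum_add hsum_sub hWnorm hW'norm
    hMadd hMsub hMW hMW' hzero hrip hZ hZ' hab
  clear_value I W' W Q P b a
  clear hW_def hW'_def ha_def hb_def hP_def hQ_def
  clear hP2 hQ2 ha0 ha hb0 hb a b W W' hI_def Z Z' M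
  have h4PQ : (0:ℝ) < 4 * (P * Q) := by linarith
  have hPQ' : P * Q ≠ 0 := ne_of_gt hPQ
  rw [abs_le]
  constructor
  · rw [show (1:ℝ)/2 * (δp + δm) * P * Q = 2 * (P*Q)^2 * (δp + δm) / (4*(P*Q)) by
      field_simp; ring]
    rw [neg_le, le_div_iff₀ h4PQ]
    linarith
  · rw [show (1:ℝ)/2 * (δp + δm) * P * Q = 2 * (P*Q)^2 * (δp + δm) / (4*(P*Q)) by
      field_simp; ring]
    rw [le_div_iff₀ h4PQ]
    linarith
end

section
/- Let Φ̃ ∈ ℂ^{n×N} with unit-norm columns, and suppose it satisfies (1-δ⁻_{S'})‖Z‖₂² ≤ ‖Φ̃Z‖₂² for all Z supported on S' = S ∪ {j} with |S| = s, j ∉ S, and ‖Φ̃Z‖₂² ≤ (1+δ⁺_S)‖Z‖₂² for all Z supported on S. Let P be the orthogonal projection onto the orthogonal complement of span{Φ̃_i : i ∈ S}. Then ‖P Φ̃_j‖₂² ≥ 1 − δ⁻_{S'}(1+δ⁺_S)/(2 + δ⁺_S − δ⁻_{S'}). -/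
open Matrix

/-- Lower bound on the component of a column outside the span of the support columns:
if `M ∈ ℂ^{n×N}` has unit-norm columns, satisfies the lower RIP bound with constant
`δ⁻` on `S' = S ∪ {j}` (`|S| = s`, `j ∉ S`) and the upper RIP bound with constant
`δ⁺` on `S`, and `P` is the orthogonal projection onto the orthogonal complement of
`span{M_i : i ∈ S}`, then `‖P M_j‖₂² ≥ 1 − δ⁻(1+δ⁺)/(2 + δ⁺ − δ⁻)`. -/
theorem stmt_12 {n N : ℕ} (M : Matrix (Fin n) (Fin N) ℂ) (s : ℕ)
    (δm δp : ℝ) (hδm0 : 0 ≤ δm) (hδm1 : δm < 1) (hδp : 0 ≤ δp)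
    (S : Finset (Fin N)) (j : Fin N) (hjS : j ∉ S) (hcard : S.card = s)
    (hcol : ∀ i : Fin N, ∑ k, ‖M k i‖ ^ 2 = 1)
    (hlow : ∀ Z : Fin N → ℂ, (∀ i, Z i ≠ 0 → i ∈ insert j S) →
      (1 - δm) * ∑ i, ‖Z i‖ ^ 2 ≤ ∑ k, ‖M.mulVec Z k‖ ^ 2)
    (hup : ∀ Z : Fin N → ℂ, (∀ i, Z i ≠ 0 → i ∈ S) →
      ∑ k, ‖M.mulVec Z k‖ ^ 2 ≤ (1 + δp) * ∑ i, ‖Z i‖ ^ 2)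
    (K : Submodule ℂ (EuclideanSpace ℂ (Fin n)))
    (hK : K = Submodule.span ℂ
      {v : EuclideanSpace ℂ (Fin n) | ∃ i ∈ S, v = fun k => M k i}) :
    1 - δm * (1 + δp) / (2 + δp - δm)
      ≤ ‖(Kᗮ.orthogonalProjection (WithLp.toLp 2 (fun k => M k j)) : EuclideanSpace ℂ (Fin n))‖ ^ 2 := by
  classical
  have hnormsq : ∀ x : EuclideanSpace ℂ (Fin n), ‖x‖ ^ 2 = ∑ k, ‖x k‖ ^ 2 := by
    intro x
    rw [EuclideanSpace.norm_eq, Real.sq_sqrt]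
    positivity
  set φ : EuclideanSpace ℂ (Fin n) := WithLp.toLp 2 (fun k => M k j) with hφ
  set p : EuclideanSpace ℂ (Fin n) := (Kᗮ.orthogonalProjection φ : EuclideanSpace ℂ (Fin n))
    with hp
  set q : EuclideanSpace ℂ (Fin n) := (K.orthogonalProjection φ : EuclideanSpace ℂ (Fin n))
    with hq
  have hdecomp : q + p = φ := K.starProjection_add_starProjection_orthogonal φ
  have hpyth : ‖φ‖ ^ 2 = ‖q‖ ^ 2 + ‖p‖ ^ 2 := by
    simpa [hq, hp] using Submodule.norm_sq_eq_add_norm_sq_projection (𝕜 := ℂ) φ K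
  have hq_mem : q ∈ K := (K.orthogonalProjection φ).2
  have key : ∀ x : EuclideanSpace ℂ (Fin n),
      x ∈ Submodule.span ℂ {v : EuclideanSpace ℂ (Fin n) | ∃ i ∈ S, v = fun k => M k i} →
      ∃ c : Fin N → ℂ, (∀ i, c i ≠ 0 → i ∈ S) ∧ ∀ k, x k = ∑ i, c i * M k i := by
    intro x hx
    induction hx using Submodule.span_induction with
    | mem v hv =>
      obtain ⟨i, hi, hv'⟩ := hv
      refine ⟨fun i' => if i' = i then 1 else 0, ?_, ?_⟩
      · intro i' h
        by_cases hii : i' = i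
        · exact hii ▸ hi
        · simp [hii] at h
      · intro k
        simp [hv', ite_mul, Finset.sum_ite_eq']
    | zero => exact ⟨0, by simp, by simp⟩
    | add x y hx hy ihx ihy =>
      obtain ⟨cx, hx1, hx2⟩ := ihx
      obtain ⟨cy, hy1, hy2⟩ := ihy
      refine ⟨cx + cy, ?_, ?_⟩
      · intro i h
        by_cases h1 : cx i = 0
        · exact hy1 i (by simpa [h1] using h)
        · exact hx1 i h1
      · intro k
        have : (x + y) k = x k + y k := rfl
        simp [this, hx2, hy2, add_mul, Finset.sum_add_distrib]
    | smul a x hx ihx =>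
      obtain ⟨cx, hx1, hx2⟩ := ihx
      refine ⟨a • cx, ?_, ?_⟩
      · intro i h
        exact hx1 i (by simpa using fun h0 => h (by simp [h0]))
      · intro k
        have : (a • x) k = a * x k := rfl
        simp [this, hx2, Finset.mul_sum, mul_assoc]
  obtain ⟨c, hcS, hcrep⟩ := key q (hK ▸ hq_mem)
  have hcj : c j = 0 := by
    by_contra h
    exact hjS (hcS j h)
  set C : ℝ := ∑ i, ‖c i‖ ^ 2 with hC
  have hC0 : 0 ≤ C := Finset.sum_nonneg fun _ _ => by positivity
  -- upper RIP applied to c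
  have hmulc : ∀ k, M.mulVec c k = q k := by
    intro k
    rw [hcrep k, Matrix.mulVec, dotProduct]
    exact Finset.sum_congr rfl fun i _ => mul_comm _ _
  have hupq : ‖q‖ ^ 2 ≤ (1 + δp) * C := by
    have h := hup c hcS
    simp only [hmulc] at h
    rw [hnormsq q]
    exact h
  -- lower RIP applied to Z = e_j - c
  set Z : Fin N → ℂ := fun i => (if i = j then 1 else 0) - c i with hZ
  have hZsupp : ∀ i, Z i ≠ 0 → i ∈ insert j S := by
    intro i h
    by_cases hij : i = j
    · simp [hij]
    · have : c i ≠ 0 := by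
        intro h0
        exact h (by simp [hZ, hij, h0])
      exact Finset.mem_insert_of_mem (hcS i this)
  have hmulZ : ∀ k, M.mulVec Z k = p k := by
    intro k
    have hφk : φ k = q k + p k := by rw [← hdecomp]; rfl
    have hpk : p k = φ k - q k := by rw [hφk]; ring
    rw [hpk, hcrep k, Matrix.mulVec, dotProduct]
    simp only [hZ, mul_sub, mul_ite, mul_one, mul_zero]
    rw [Finset.sum_sub_distrib, Finset.sum_ite_eq' Finset.univ j (fun i => M k i)]
    simp [hφ, mul_comm]
  have hZsum : ∑ i, ‖Z i‖ ^ 2 = 1 + C := by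
    have h1 : ∀ i, i ≠ j → ‖Z i‖ ^ 2 = ‖c i‖ ^ 2 := by
      intro i hij
      simp [hZ, hij]
    have h2 : ‖Z j‖ ^ 2 = 1 := by simp [hZ, hcj]
    rw [← Finset.add_sum_erase _ _ (Finset.mem_univ j), h2, hC,
      ← Finset.add_sum_erase _ (fun i => ‖c i‖ ^ 2) (Finset.mem_univ j)]
    have : ‖c j‖ ^ 2 = 0 := by simp [hcj]
    rw [this, zero_add]
    congr 1
    exact Finset.sum_congr rfl fun i hi => h1 i (Finset.ne_of_mem_erase hi)
  have hlowp : (1 - δm) * (1 + C) ≤ ‖p‖ ^ 2 := by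
    have h := hlow Z hZsupp
    simp only [hmulZ] at h
    rw [hnormsq p]
    rw [hZsum] at h
    exact h
  have hφ1 : ‖φ‖ ^ 2 = 1 := by rw [hnormsq]; exact hcol j
  have hD : 0 < 2 + δp - δm := by linarith
  have h2 : 1 - ‖p‖ ^ 2 ≤ (1 + δp) * C := by linarith
  rw [sub_le_iff_le_add, ← sub_le_iff_le_add', le_div_iff₀ hD]
  nlinarith [mul_le_mul_of_nonneg_right hlowp (by linarith : (0:ℝ) ≤ 1 + δp),
    mul_le_mul_of_nonneg_left h2 (by linarith : (0:ℝ) ≤ 1 - δm)]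
end
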